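/- arXiv:1012.3140 — 6 statements merged into one kernel-verified Lean document; each statement's English description precedes it below -/
import Mathlib

section
/- Fix κ > 0, σ > 0, δ > 0. For each integer N ≥ 2 let l_N = N(N−1)/κ, let R_N(0) ≥ 0 with sup_N R_N(0) < ∞, and define R_N(t) = σ²δ⁻¹ l_N (1 − exp(−δt/l_N)) + exp(−δt/l_N) R_N(0) for t ≥ 0. If t : ℕ → (0,∞) satisfies t(N) → ∞ and t(N)/N² → 0 as N → ∞, then R_N(t(N)) / (σ² t(N)) → 1 as N → ∞ (slow time scale: initial desynchronization). -/
open Real Filter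

/-- slow time scale: initial desynchronization.
With `l_N = N(N−1)/κ` and
`R_N(t) = σ²δ⁻¹ l_N (1 − exp(−δt/l_N)) + exp(−δt/l_N) R_N(0)`,
if `t(N) → ∞` and `t(N)/N² → 0`, then `R_N(t(N)) / (σ² t(N)) → 1`. -/
theorem stmt_1 (κ σ δ : ℝ) (hκ : 0 < κ) (hσ : 0 < σ) (hδ : 0 < δ)
    (R₀ : ℕ → ℝ) (hR₀ : ∀ N, 2 ≤ N → 0 ≤ R₀ N) (hsup : ∃ C : ℝ, ∀ N, 2 ≤ N → R₀ N ≤ C)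
    (l : ℕ → ℝ) (hl : ∀ N : ℕ, 2 ≤ N → l N = (N : ℝ) * ((N : ℝ) - 1) / κ)
    (R : ℕ → ℝ → ℝ)
    (hR : ∀ N : ℕ, 2 ≤ N → ∀ t : ℝ, 0 ≤ t → R N t =
      σ ^ 2 * δ⁻¹ * l N * (1 - Real.exp (-δ * t / l N)) + Real.exp (-δ * t / l N) * R₀ N)
    (t : ℕ → ℝ) (ht : ∀ N, 0 < t N)
    (htinf : Tendsto t atTop atTop)
    (hslow : Tendsto (fun N : ℕ => t N / (N : ℝ) ^ 2) atTop (nhds 0)) :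
    Tendsto (fun N : ℕ => R N (t N) / (σ ^ 2 * t N)) atTop (nhds 1) := by
  obtain ⟨C, hC⟩ := hsup
  set x : ℕ → ℝ := fun N => δ * t N / l N with hxdef
  have hlpos : ∀ N : ℕ, 2 ≤ N → 0 < l N := by
    intro N hN
    rw [hl N hN]
    have hN1 : (1:ℝ) < (N:ℝ) := by exact_mod_cast Nat.lt_of_lt_of_le one_lt_two hN
    have h0 : (0:ℝ) < (N:ℝ) := by linarith
    exact div_pos (mul_pos h0 (by linarith)) hκ
  have hxpos : ∀ N : ℕ, 2 ≤ N → 0 < x N := by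
    intro N hN
    exact div_pos (mul_pos hδ (ht N)) (hlpos N hN)
  -- x N → 0
  have hxbound : ∀ N : ℕ, 2 ≤ N → x N ≤ (2 * κ * δ) * (t N / (N : ℝ) ^ 2) := by
    intro N hN
    have hN2 : (2:ℝ) ≤ (N:ℝ) := by exact_mod_cast hN
    have hNpos : (0:ℝ) < (N:ℝ) := by linarith
    have hlo : (N:ℝ) ^ 2 / (2 * κ) ≤ l N := by
      rw [hl N hN]
      rw [div_le_div_iff₀ (by positivity) hκ]
      nlinarith [mul_nonneg (mul_nonneg hNpos.le hκ.le) (by linarith : (0:ℝ) ≤ (N:ℝ) - 2)]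
    have h1 : δ * t N / l N ≤ δ * t N / ((N:ℝ) ^ 2 / (2 * κ)) := by
      apply div_le_div_of_nonneg_left (mul_pos hδ (ht N)).le (div_pos (pow_pos hNpos 2) (by positivity)) hlo
    calc x N ≤ δ * t N / ((N:ℝ) ^ 2 / (2 * κ)) := h1
      _ = (2 * κ * δ) * (t N / (N : ℝ) ^ 2) := by
          field_simp
  have hx0 : Tendsto x atTop (nhds 0) := by
    have hupper : Tendsto (fun N : ℕ => (2 * κ * δ) * (t N / (N : ℝ) ^ 2)) atTop (nhds 0) := by
      simpa using hslow.const_mul (2 * κ * δ)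
    refine squeeze_zero' ?_ ?_ hupper
    · filter_upwards [eventually_ge_atTop 2] with N hN using le_of_lt (hxpos N hN)
    · filter_upwards [eventually_ge_atTop 2] with N hN using hxbound N hN
  -- first term tends to 1 via derivative of exp at 0
  have hslope : Tendsto (slope Real.exp 0) (nhdsWithin 0 {0}ᶜ) (nhds 1) := by
    have := hasDerivAt_iff_tendsto_slope.mp (Real.hasDerivAt_exp 0)
    simpa using this
  have hnegx : Tendsto (fun N => -x N) atTop (nhdsWithin 0 {0}ᶜ) := by
    apply tendsto_nhdsWithin_of_tendsto_nhds_of_eventually_within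
    · simpa using hx0.neg
    · filter_upwards [eventually_ge_atTop 2] with N hN
      exact (neg_lt_zero.mpr (hxpos N hN)).ne
  have hterm1 : Tendsto (fun N => slope Real.exp 0 (-x N)) atTop (nhds 1) := hslope.comp hnegx
  -- second term tends to 0
  have hσt : Tendsto (fun N : ℕ => σ ^ 2 * t N) atTop atTop := by
    exact Tendsto.const_mul_atTop (by positivity) htinf
  have hterm2 : Tendsto (fun N => Real.exp (-x N) * R₀ N / (σ ^ 2 * t N)) atTop (nhds 0) := by
    have hupper : Tendsto (fun N : ℕ => max C 0 / (σ ^ 2 * t N)) atTop (nhds 0) := by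
      exact tendsto_const_nhds.div_atTop hσt
    refine squeeze_zero' ?_ ?_ hupper
    · filter_upwards [eventually_ge_atTop 2] with N hN
      exact div_nonneg (mul_nonneg (Real.exp_nonneg _) (hR₀ N hN))
        (mul_pos (pow_pos hσ 2) (ht N)).le
    · filter_upwards [hσt.eventually_ge_atTop 1, eventually_ge_atTop 2] with N hN1 hN
      apply div_le_div_of_nonneg_right ?_ (by linarith)
      calc Real.exp (-x N) * R₀ N ≤ 1 * R₀ N := by
            apply mul_le_mul_of_nonneg_right _ (hR₀ N hN)
            exact Real.exp_le_one_iff.mpr (by linarith [hxpos N hN])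
        _ = R₀ N := one_mul _
        _ ≤ max C 0 := le_max_of_le_left (hC N hN)
  have hsum := hterm1.add hterm2
  rw [add_zero] at hsum
  apply hsum.congr'
  filter_upwards [eventually_ge_atTop 2] with N hN
  have hln : l N ≠ 0 := (hlpos N hN).ne'
  have htn : t N ≠ 0 := (ht N).ne'
  have hxn : x N ≠ 0 := (hxpos N hN).ne'
  have harg : -δ * t N / l N = -x N := by rw [hxdef]; ring
  rw [hR N hN (t N) (ht N).le, harg]
  rw [slope_def_field]
  rw [hxdef]
  simp only [Real.exp_zero]
  field_simp
  ring
end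

section
/- Fix κ > 0, σ > 0, δ > 0 and c > 0. For each integer N ≥ 2 let l_N = N(N−1)/κ, let R_N(0) ≥ 0 with sup_N R_N(0) < ∞, and define R_N(t) = σ²δ⁻¹ l_N (1 − exp(−δt/l_N)) + exp(−δt/l_N) R_N(0) for t ≥ 0. If t(N) = cN²/(κδ), then R_N(t(N)) / (σ² t(N)) → (1 − e^{−c})/c as N → ∞ (critical time scale: critical slowdown of desynchronization). -/
open Real Filter

/-- critical time scale: critical slowdown of desynchronization.
With `l_N = N(N−1)/κ`,
`R_N(t) = σ²δ⁻¹ l_N (1 − exp(−δt/l_N)) + exp(−δt/l_N) R_N(0)` and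
`t(N) = cN²/(κδ)`, one has `R_N(t(N)) / (σ² t(N)) → (1 − e^{−c})/c`. -/
theorem stmt_2 (κ σ δ c : ℝ) (hκ : 0 < κ) (hσ : 0 < σ) (hδ : 0 < δ) (hc : 0 < c)
    (R₀ : ℕ → ℝ) (hR₀ : ∀ N, 2 ≤ N → 0 ≤ R₀ N) (hsup : ∃ C : ℝ, ∀ N, 2 ≤ N → R₀ N ≤ C)
    (l : ℕ → ℝ) (hl : ∀ N : ℕ, 2 ≤ N → l N = (N : ℝ) * ((N : ℝ) - 1) / κ)
    (R : ℕ → ℝ → ℝ)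
    (hR : ∀ N : ℕ, 2 ≤ N → ∀ t : ℝ, 0 ≤ t → R N t =
      σ ^ 2 * δ⁻¹ * l N * (1 - Real.exp (-δ * t / l N)) + Real.exp (-δ * t / l N) * R₀ N)
    (t : ℕ → ℝ) (ht : ∀ N : ℕ, t N = c * (N : ℝ) ^ 2 / (κ * δ)) :
    Tendsto (fun N : ℕ => R N (t N) / (σ ^ 2 * t N)) atTop
      (nhds ((1 - Real.exp (-c)) / c)) := by
  obtain ⟨C, hC⟩ := hsup
  set g : ℕ → ℝ := fun N => (N : ℝ) / ((N : ℝ) - 1) with hg_def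
  -- basic positivity for N ≥ 2
  have hNpos : ∀ N : ℕ, 2 ≤ N → (0 : ℝ) < (N : ℝ) - 1 := by
    intro N hN
    have : (2 : ℝ) ≤ (N : ℝ) := by exact_mod_cast hN
    linarith
  have htpos : ∀ N : ℕ, 2 ≤ N → 0 < t N := by
    intro N hN
    have h2 : (2 : ℝ) ≤ (N : ℝ) := by exact_mod_cast hN
    rw [ht]
    positivity
  -- g tends to 1
  have hg1 : Tendsto g atTop (nhds 1) := by
    have h1 : Tendsto (fun N : ℕ => (N : ℝ) - 1) atTop atTop :=
      tendsto_atTop_add_const_right _ _ tendsto_natCast_atTop_atTop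
    have h2 : Tendsto (fun N : ℕ => ((N : ℝ) - 1)⁻¹) atTop (nhds 0) :=
      tendsto_inv_atTop_zero.comp h1
    have h3 : Tendsto (fun N : ℕ => 1 + ((N : ℝ) - 1)⁻¹) atTop (nhds (1 + 0)) :=
      tendsto_const_nhds.add h2
    rw [add_zero] at h3
    apply h3.congr'
    filter_upwards [eventually_atTop.2 ⟨2, fun N hN => hN⟩] with N hN
    have h := hNpos N hN
    field_simp [hg_def]
    simp only [hg_def]
    rw [mul_div_assoc', mul_div_cancel_left₀ _ h.ne']
    ring
  -- exp term tends to exp(-c)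
  have hexp : Tendsto (fun N : ℕ => Real.exp (-(c * g N))) atTop (nhds (Real.exp (-c))) := by
    have : Tendsto (fun N : ℕ => -(c * g N)) atTop (nhds (-(c * 1))) :=
      (tendsto_const_nhds.mul hg1).neg
    rw [mul_one] at this
    exact (Real.continuous_exp.tendsto _).comp this
  -- first term
  have hterm1 : Tendsto (fun N : ℕ => (g N)⁻¹ * (1 - Real.exp (-(c * g N))) / c) atTop
      (nhds ((1 - Real.exp (-c)) / c)) := by
    have hone : Tendsto (fun _ : ℕ => (1 : ℝ)) atTop (nhds 1) := tendsto_const_nhds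
    have h := ((hg1.inv₀ one_ne_zero).mul (hone.sub hexp)).div_const c
    simpa using h
  -- σ² t N tends to atTop
  have hst : Tendsto (fun N : ℕ => σ ^ 2 * t N) atTop atTop := by
    have hpow : Tendsto (fun N : ℕ => (N : ℝ) ^ 2) atTop atTop :=
      (tendsto_pow_atTop two_ne_zero).comp tendsto_natCast_atTop_atTop
    have hconst : 0 < σ ^ 2 * c / (κ * δ) := by positivity
    have h := hpow.const_mul_atTop hconst
    apply h.congr
    intro N
    rw [ht]
    field_simp
  -- second term tends to 0
  have hterm2 : Tendsto (fun N : ℕ => Real.exp (-(c * g N)) * R₀ N / (σ ^ 2 * t N)) atTop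
      (nhds 0) := by
    have hub : Tendsto (fun N : ℕ => max C 0 / (σ ^ 2 * t N)) atTop (nhds 0) :=
      tendsto_const_nhds.div_atTop hst
    apply squeeze_zero' (g := fun N => max C 0 / (σ ^ 2 * t N))
    · filter_upwards [eventually_atTop.2 ⟨2, fun N hN => hN⟩] with N hN
      have := htpos N hN
      have := hR₀ N hN
      positivity
    · filter_upwards [eventually_atTop.2 ⟨2, fun N hN => hN⟩] with N hN
      have htp := htpos N hN
      have hRp := hR₀ N hN
      have hNp := hNpos N hN
      have hgnn : 0 ≤ g N := by
        have : (0 : ℝ) ≤ (N : ℝ) := Nat.cast_nonneg N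
        exact div_nonneg this hNp.le
      have hexple : Real.exp (-(c * g N)) ≤ 1 := by
        apply Real.exp_le_one_iff.mpr
        have : 0 ≤ c * g N := mul_nonneg hc.le hgnn
        linarith
      have hnum : Real.exp (-(c * g N)) * R₀ N ≤ max C 0 := by
        calc Real.exp (-(c * g N)) * R₀ N ≤ 1 * R₀ N :=
              mul_le_mul_of_nonneg_right hexple hRp
          _ = R₀ N := one_mul _
          _ ≤ C := hC N hN
          _ ≤ max C 0 := le_max_left _ _
      exact div_le_div_of_nonneg_right hnum (by positivity) |>.trans_eq rfl
    · exact hub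
  -- combine
  have hsum := hterm1.add hterm2
  rw [add_zero] at hsum
  apply hsum.congr'
  filter_upwards [eventually_atTop.2 ⟨2, fun N hN => hN⟩] with N hN
  have htp := htpos N hN
  have hNp := hNpos N hN
  have hN2 : (2 : ℝ) ≤ (N : ℝ) := by exact_mod_cast hN
  have hNpos' : (0 : ℝ) < (N : ℝ) := by linarith
  have harg : -δ * t N / l N = -(c * g N) := by
    rw [ht, hl N hN, hg_def]
    field_simp
  have hcoef : σ ^ 2 * δ⁻¹ * l N / (σ ^ 2 * t N) = (g N)⁻¹ / c := by
    rw [ht, hl N hN, hg_def]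
    field_simp
  rw [hR N hN (t N) htp.le, harg]
  have : (σ ^ 2 * δ⁻¹ * l N * (1 - Real.exp (-(c * g N))) +
      Real.exp (-(c * g N)) * R₀ N) / (σ ^ 2 * t N) =
      (σ ^ 2 * δ⁻¹ * l N / (σ ^ 2 * t N)) * (1 - Real.exp (-(c * g N))) +
      Real.exp (-(c * g N)) * R₀ N / (σ ^ 2 * t N) := by ring
  rw [this, hcoef]
  ring
end

section
/- Fix κ > 0, c > 0 and, for each integer N ≥ 2, parameters σ_N > 0, δ_N > 0, l_N = N(N−1)/κ, and R_N(0) ≥ 0 with sup_N R_N(0) < ∞; define R_N(t) = σ_N²δ_N⁻¹ l_N (1 − exp(−δ_N t/l_N)) + exp(−δ_N t/l_N) R_N(0) for t ≥ 0. Let t : ℕ → (0,∞) and set α_N = κ δ_N t(N)/N². If α_N → c and σ_N² t(N) → ∞ as N → ∞, then R_N(t(N)) / (σ_N² t(N)) → (1 − e^{−c})/c as N → ∞. -/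
open Real Filter

/-- varying parameters, critical time scale.
With `l_N = N(N−1)/κ`,
`R_N(t) = σ_N²δ_N⁻¹ l_N (1 − exp(−δ_N t/l_N))` and
`α_N = κ δ_N t(N)/N²`, if `α_N → c > 0` and `σ_N² t(N) → ∞`, then
`R_N(t(N)) / (σ_N² t(N)) → (1 − e^{−c})/c`. -/
theorem stmt_5 (κ c : ℝ) (hκ : 0 < κ) (hc : 0 < c)
    (σ δ : ℕ → ℝ) (hσ : ∀ N, 2 ≤ N → 0 < σ N) (hδ : ∀ N, 2 ≤ N → 0 < δ N)
    (R₀ : ℕ → ℝ) (hR₀ : ∀ N, 2 ≤ N → 0 ≤ R₀ N) (hsup : ∃ C : ℝ, ∀ N, 2 ≤ N → R₀ N ≤ C)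
    (l : ℕ → ℝ) (hl : ∀ N : ℕ, 2 ≤ N → l N = (N : ℝ) * ((N : ℝ) - 1) / κ)
    (R : ℕ → ℝ → ℝ)
    (hR : ∀ N : ℕ, 2 ≤ N → ∀ t : ℝ, 0 ≤ t → R N t =
      (σ N) ^ 2 * (δ N)⁻¹ * l N * (1 - Real.exp (-(δ N) * t / l N))
        + Real.exp (-(δ N) * t / l N) * R₀ N)
    (t : ℕ → ℝ) (ht : ∀ N, 0 < t N)
    (α : ℕ → ℝ) (hα : ∀ N : ℕ, α N = κ * δ N * t N / (N : ℝ) ^ 2)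
    (hαc : Tendsto α atTop (nhds c))
    (hst : Tendsto (fun N : ℕ => (σ N) ^ 2 * t N) atTop atTop) :
    Tendsto (fun N : ℕ => R N (t N) / ((σ N) ^ 2 * t N)) atTop
      (nhds ((1 - Real.exp (-c)) / c)) := by
  obtain ⟨C, hC⟩ := hsup
  set β : ℕ → ℝ := fun N => δ N * t N / l N with hβdef
  have hNpos : ∀ N : ℕ, 2 ≤ N → (0:ℝ) < (N:ℝ) - 1 ∧ (0:ℝ) < (N:ℝ) := by
    intro N hN
    have : (2:ℝ) ≤ (N:ℝ) := by exact_mod_cast hN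
    constructor <;> linarith
  have hlpos : ∀ N : ℕ, 2 ≤ N → 0 < l N := by
    intro N hN
    rw [hl N hN]
    exact div_pos (mul_pos (hNpos N hN).2 (hNpos N hN).1) hκ
  have hβpos : ∀ N : ℕ, 2 ≤ N → 0 < β N := by
    intro N hN
    exact div_pos (mul_pos (hδ N hN) (ht N)) (hlpos N hN)
  -- β N → c
  have hβc : Tendsto β atTop (nhds c) := by
    have h1 : Tendsto (fun N : ℕ => ((N:ℝ) - 1)⁻¹) atTop (nhds 0) := by
      have : Tendsto (fun N : ℕ => ((N:ℝ) - 1)) atTop atTop :=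
        tendsto_atTop_add_const_right _ (-1) tendsto_natCast_atTop_atTop
      exact this.inv_tendsto_atTop
    have h2 : Tendsto (fun N : ℕ => α N * (1 + ((N:ℝ) - 1)⁻¹)) atTop (nhds (c * (1 + 0))) :=
      hαc.mul (tendsto_const_nhds.add h1)
    rw [mul_add, mul_zero, mul_one, add_zero] at h2
    refine h2.congr' ?_
    filter_upwards [eventually_ge_atTop 2] with N hN
    have hN1 : ((N:ℝ) - 1) ≠ 0 := (hNpos N hN).1.ne'
    have hNne : ((N:ℝ)) ≠ 0 := (hNpos N hN).2.ne'
    rw [hα N]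
    show _ = δ N * t N / l N
    rw [hl N hN]
    field_simp
    ring
  have hβne : ∀ᶠ N in atTop, β N ≠ 0 := by
    filter_upwards [eventually_ge_atTop 2] with N hN using (hβpos N hN).ne'
  -- limit of first term
  have hfirst : Tendsto (fun N : ℕ => (1 - Real.exp (-β N)) / β N) atTop
      (nhds ((1 - Real.exp (-c)) / c)) := by
    have hcont : ContinuousAt (fun x : ℝ => (1 - Real.exp (-x)) / x) c :=
      ((continuousAt_const.sub (Real.continuous_exp.continuousAt.comp
        continuousAt_id.neg))).div continuousAt_id hc.ne'
    exact hcont.tendsto.comp hβc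
  -- limit of second term
  have hsecond : Tendsto (fun N : ℕ => Real.exp (-β N) * R₀ N / ((σ N) ^ 2 * t N)) atTop
      (nhds 0) := by
    have hCst : Tendsto (fun N : ℕ => C / ((σ N) ^ 2 * t N)) atTop (nhds 0) :=
      Tendsto.div_atTop tendsto_const_nhds hst
    refine tendsto_of_tendsto_of_tendsto_of_le_of_le' tendsto_const_nhds hCst ?_ ?_
    · filter_upwards [eventually_ge_atTop 2] with N hN
      have hden : 0 < (σ N) ^ 2 * t N := mul_pos (pow_pos (hσ N hN) 2) (ht N)
      exact div_nonneg (mul_nonneg (Real.exp_nonneg _) (hR₀ N hN)) hden.le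
    · filter_upwards [eventually_ge_atTop 2] with N hN
      have hden : 0 < (σ N) ^ 2 * t N := mul_pos (pow_pos (hσ N hN) 2) (ht N)
      refine div_le_div_of_nonneg_right ?_ hden.le
      calc Real.exp (-β N) * R₀ N ≤ 1 * R₀ N := by
            apply mul_le_mul_of_nonneg_right _ (hR₀ N hN)
            exact Real.exp_le_one_iff.mpr (by linarith [hβpos N hN])
        _ = R₀ N := one_mul _
        _ ≤ C := hC N hN
  have := hfirst.add hsecond
  rw [add_zero] at this
  refine this.congr' ?_
  filter_upwards [eventually_ge_atTop 2] with N hN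
  have hden : ((σ N) ^ 2 * t N) ≠ 0 := (mul_pos (pow_pos (hσ N hN) 2) (ht N)).ne'
  have harg : -(δ N) * t N / l N = -β N := by rw [hβdef]; ring
  rw [hR N hN (t N) (ht N).le, harg]
  rw [hβdef]
  have hδne : δ N ≠ 0 := (hδ N hN).ne'
  have hlne : l N ≠ 0 := (hlpos N hN).ne'
  have htne : t N ≠ 0 := (ht N).ne'
  have hσne : (σ N : ℝ) ≠ 0 := (hσ N hN).ne'
  field_simp
end

section
/- Let N ≥ 2 and x ∈ ℝ^N. For an ordered pair of distinct indices (i,j), i,j ∈ {1,…,N}, i ≠ j, let x^{(i,j)} ∈ ℝ^N be the configuration obtained from x by the synchronizing jump (x_i, x_j) → (x_i, x_i), i.e. (x^{(i,j)})_j = x_i and (x^{(i,j)})_m = x_m for m ≠ j. Then the average of the empirical variance over all N(N−1) ordered pairs satisfies (1/(N(N−1))) Σ_{(i,j): i≠j} V(x^{(i,j)}) = (1 − 2/(N(N−1))) V(x). -/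
open Finset

/-- Center of mass of a configuration `x ∈ ℝ^N`. -/
noncomputable def centerOfMass {N : ℕ} (x : Fin N → ℝ) : ℝ :=
  (∑ m, x m) / N

/-- Empirical variance `V(x) = (1/(N−1)) Σ (x_m − M(x))²`. -/
noncomputable def empVar {N : ℕ} (x : Fin N → ℝ) : ℝ :=
  (∑ m, (x m - centerOfMass x) ^ 2) / ((N : ℝ) - 1)

/-- contraction lemma for pairwise synchronization.
For a configuration `x ∈ ℝ^N`, `N ≥ 2`, the average of the empirical variance
over all `N(N−1)` configurations obtained by a synchronizing jump
`(x_i, x_j) → (x_i, x_i)` (for an ordered pair `i ≠ j`) equals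
`(1 − 2/(N(N−1))) V(x)`. -/
theorem stmt_7 (N : ℕ) (hN : 2 ≤ N) (x : Fin N → ℝ) :
    (1 / ((N : ℝ) * ((N : ℝ) - 1))) *
      ∑ p ∈ Finset.univ.filter (fun p : Fin N × Fin N => p.1 ≠ p.2),
        empVar (Function.update x p.2 (x p.1))
    = (1 - 2 / ((N : ℝ) * ((N : ℝ) - 1))) * empVar x := by
  have hN2 : (2:ℝ) ≤ (N:ℝ) := by exact_mod_cast hN
  have hN0 : (N:ℝ) ≠ 0 := by linarith
  have hN1 : (N:ℝ) - 1 ≠ 0 := by linarith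
  have hcard : ((Finset.univ : Finset (Fin N)).card : ℝ) = (N:ℝ) := by simp
  set A := ∑ m, x m with hA
  set B := ∑ m, (x m)^2 with hB
  have hsum_c : ∀ c : ℝ, ∑ _m : Fin N, c = (N:ℝ) * c := by
    intro c; rw [Finset.sum_const]; simp [nsmul_eq_mul]
  -- empVar in terms of sums
  have hvar : ∀ y : Fin N → ℝ,
      empVar y = ((∑ m, (y m)^2) - (∑ m, y m)^2/(N:ℝ))/((N:ℝ)-1) := by
    intro y
    unfold empVar centerOfMass
    congr 1
    have h1 : ∀ m : Fin N, (y m - (∑ k, y k)/(N:ℝ))^2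
        = (y m)^2 - (2*((∑ k, y k)/(N:ℝ)))*(y m) + ((∑ k, y k)/(N:ℝ))^2 := by
      intro m; ring
    rw [Finset.sum_congr rfl (fun m _ => h1 m)]
    rw [Finset.sum_add_distrib, Finset.sum_sub_distrib, ← Finset.mul_sum, hsum_c]
    field_simp
    ring
  have hV : empVar x = (B - A^2/(N:ℝ))/((N:ℝ)-1) := hvar x
  -- sums over updated configurations
  have hupd : ∀ (j : Fin N) (c : ℝ) (f : ℝ → ℝ),
      ∑ m, f (Function.update x j c m) = (∑ m, f (x m)) - f (x j) + f c := by
    intro j c f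
    have h2 : ∀ m : Fin N, f (Function.update x j c m)
        = Function.update (fun m => f (x m)) j (f c) m := by
      intro m
      exact (Function.apply_update (fun _ y => f y) x j c m)
    rw [Finset.sum_congr rfl (fun m _ => h2 m),
      Finset.sum_update_of_mem (Finset.mem_univ j),
      Finset.sum_sdiff_eq_sub (Finset.subset_univ {j}),
      Finset.sum_singleton]
    ring
  have hvarU : ∀ i j : Fin N, empVar (Function.update x j (x i))
      = (B - (x j)^2 + (x i)^2 - ((A - x j) + x i)^2/(N:ℝ))/((N:ℝ)-1) := by
    intro i j
    rw [hvar]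
    have e1 : ∑ m, Function.update x j (x i) m = A - x j + x i := by
      have := hupd j (x i) (fun y => y); simpa using this
    have e2 : ∑ m, (Function.update x j (x i) m)^2 = B - (x j)^2 + (x i)^2 := by
      have := hupd j (x i) (fun y => y^2); simpa using this
    rw [e1, e2]
  -- split the filtered sum
  set F : Fin N × Fin N → ℝ := fun p => empVar (Function.update x p.2 (x p.1)) with hF
  have hFdiag : ∀ i : Fin N, F (i, i) = empVar x := by
    intro i
    show empVar (Function.update x i (x i)) = empVar x
    rw [Function.update_eq_self]
  have hdiag : ∑ p ∈ Finset.univ.filter (fun p : Fin N × Fin N => ¬ p.1 ≠ p.2), F p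
      = (N:ℝ) * empVar x := by
    rw [Finset.sum_filter, Fintype.sum_prod_type]
    simp only [not_not]
    have h6 : ∀ i : Fin N, (∑ j, if i = j then F (i, j) else 0) = empVar x := by
      intro i
      rw [Finset.sum_ite_eq (Finset.univ) i (fun j => F (i, j))]
      simp [hFdiag]
    rw [Finset.sum_congr rfl (fun i _ => h6 i), hsum_c]
  have hsplit : ∑ p ∈ Finset.univ.filter (fun p : Fin N × Fin N => p.1 ≠ p.2), F p
      = (∑ i, ∑ j, F (i, j)) - (N:ℝ) * empVar x := by
    have h := Finset.sum_filter_add_sum_filter_not Finset.univ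
      (fun p : Fin N × Fin N => p.1 ≠ p.2) F
    rw [hdiag] at h
    rw [← Fintype.sum_prod_type]
    linarith
  -- compute the total sum
  have hsq : ∀ c : ℝ, ∑ m, (c + x m)^2 = (N:ℝ)*c^2 + 2*c*A + B := by
    intro c
    have h3 : ∀ m : Fin N, (c + x m)^2 = c^2 + (2*c)*(x m) + (x m)^2 := by
      intro m; ring
    rw [Finset.sum_congr rfl (fun m _ => h3 m), Finset.sum_add_distrib,
      Finset.sum_add_distrib, ← Finset.mul_sum, hsum_c, ← hA, ← hB]
  have hquad : ∀ c0 c1 c2 : ℝ, ∑ m, (c0 + c1 * x m + c2 * (x m)^2)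
      = (N:ℝ)*c0 + c1*A + c2*B := by
    intro c0 c1 c2
    rw [Finset.sum_add_distrib, Finset.sum_add_distrib, ← Finset.mul_sum,
      ← Finset.mul_sum, hsum_c, ← hA, ← hB]
  have hinner : ∀ j : Fin N, ∑ i, F (i, j)
      = ((N:ℝ)*(B - (x j)^2) + B - ((N:ℝ)*(A - x j)^2 + 2*(A - x j)*A + B)/(N:ℝ))/((N:ℝ)-1) := by
    intro j
    have h4 : ∀ i : Fin N, F (i, j)
        = ((B - (x j)^2 - (A - x j)^2/(N:ℝ))
          + (-(2*(A - x j)/(N:ℝ))) * x i + (1 - 1/(N:ℝ)) * (x i)^2) / ((N:ℝ)-1) := by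
      intro i
      show empVar (Function.update x j (x i)) = _
      rw [hvarU i j]
      field_simp
      ring
    rw [Finset.sum_congr rfl (fun i _ => h4 i), ← Finset.sum_div, hquad]
    field_simp
    ring
  have houter : ∑ i, ∑ j, F (i, j)
      = ((N:ℝ)^2*B - 2*B - (N:ℝ)*A^2 + 2*A^2/(N:ℝ))/((N:ℝ)-1) := by
    rw [Finset.sum_comm]
    have h5 : ∀ j : Fin N, ∑ i, F (i, j)
        = (((N:ℝ)*B + B - A^2 - 2*A^2/(N:ℝ) - B/(N:ℝ))/((N:ℝ)-1))
          + ((2*A + 2*A/(N:ℝ))/((N:ℝ)-1)) * x j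
          + ((-(N:ℝ) - 1)/((N:ℝ)-1)) * (x j)^2 := by
      intro j
      rw [hinner j]
      field_simp
      ring
    rw [Finset.sum_congr rfl (fun j _ => h5 j), hquad]
    field_simp
    ring
  rw [hsplit, houter, hV]
  field_simp
  ring
end

section
/- Let l ≥ 1 and let a signature (k_1,…,k_l) of integers k_j ≥ 2 be given, with k = k_1 + ⋯ + k_l, and let N ≥ k. For an injective tuple I = (i_1,…,i_k) of indices in {1,…,N}, partition the positions 1,…,k into consecutive blocks B_1,…,B_l of sizes k_1,…,k_l, let g_j = i_{k_1+⋯+k_{j−1}+1} be the leader index of block j, and define the synchronized configuration J_I x ∈ ℝ^N by (J_I x)_m = x_{g_j} if m = i_p for some p ∈ B_j, and (J_I x)_m = x_m if m is not among i_1,…,i_k. Then the average of V(J_I x) over all N(N−1)⋯(N−k+1) injective tuples I equals (1 − κ/(N(N−1))) V(x), where κ = Σ_{j=1}^l k_j² − k. -/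
open Finset

/-- `offset ks j = k_1 + ⋯ + k_{j-1}`: the first position (0-based) of the
`j`-th consecutive block in a signature `(k_1,…,k_l)`. -/
def offset {l : ℕ} (ks : Fin l → ℕ) (j : Fin l) : ℕ :=
  ∑ j' ∈ Finset.univ.filter (fun j' => j' < j), ks j'

/-- The index of the block containing position `p`: the largest `j` whose
block starts at or before `p`. -/
def blockOf {l : ℕ} (hl : 0 < l) (ks : Fin l → ℕ) (p : ℕ) : Fin l :=
  (Finset.univ.filter (fun j => offset ks j ≤ p)).max'
    ⟨⟨0, hl⟩, by
      simp only [Finset.mem_filter, Finset.mem_univ, true_and]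
      have : offset ks ⟨0, hl⟩ = 0 := by
        unfold offset
        apply Finset.sum_eq_zero
        intro j' hj'
        simp [Fin.lt_def] at hj'
      rw [this]
      exact Nat.zero_le _⟩

/-- The position of the leader of the block containing position `p`
(the first position of that block). -/
def leaderPos {l : ℕ} (hl : 0 < l) (ks : Fin l → ℕ)
    (p : Fin (∑ j, ks j)) : Fin (∑ j, ks j) :=
  ⟨offset ks (blockOf hl ks p.val), by
    have hmem : blockOf hl ks p.val ∈
        Finset.univ.filter (fun j => offset ks j ≤ p.val) :=
      Finset.max'_mem _ _
    exact lt_of_le_of_lt (Finset.mem_filter.mp hmem).2 p.isLt⟩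

/-- The synchronizing map `J_I` of signature `(k_1,…,k_l)` attached to the
tuple `I = (i_1,…,i_k)`: every particle whose index occurs in `I` jumps to
the position of the leader of its block; all other particles stay put. -/
noncomputable def syncMap {l : ℕ} (hl : 0 < l) (ks : Fin l → ℕ) {N : ℕ}
    (I : Fin (∑ j, ks j) → Fin N) (x : Fin N → ℝ) : Fin N → ℝ :=
  fun m => if h : ∃ p, I p = m then x (I (leaderPos hl ks h.choose)) else x m


section Aux
section BlockLemmas
variable {l : ℕ} (hl : 0 < l) (ks : Fin l → ℕ)


lemma offset_add_le {j j' : Fin l} (h : j < j') : offset ks j + ks j ≤ offset ks j' := by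
  have : insert j (Finset.univ.filter (fun j'' => j'' < j)) ⊆
      Finset.univ.filter (fun j'' => j'' < j') := by
    intro a ha
    rcases Finset.mem_insert.mp ha with rfl | ha
    · simp [h]
    · simp only [Finset.mem_filter, Finset.mem_univ, true_and] at ha ⊢
      exact ha.trans h
  have hs := Finset.sum_le_sum_of_subset (f := ks) this
  rwa [Finset.sum_insert (by simp), add_comm] at hs

lemma le_offset_total (j : Fin l) : offset ks j + ks j ≤ ∑ j', ks j' := by
  have : insert j (Finset.univ.filter (fun j'' => j'' < j)) ⊆ Finset.univ := by
    intro a _; simp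
  have hs := Finset.sum_le_sum_of_subset (f := ks) this
  rwa [Finset.sum_insert (by simp), add_comm] at hs

lemma offset_le_self (p : ℕ) : offset ks (blockOf hl ks p) ≤ p := by
  have hmem := Finset.max'_mem (Finset.univ.filter (fun j => offset ks j ≤ p))
    ⟨⟨0, hl⟩, by
      simp only [Finset.mem_filter, Finset.mem_univ, true_and]
      have : offset ks ⟨0, hl⟩ = 0 := by
        unfold offset
        apply Finset.sum_eq_zero
        intro j' hj'
        simp [Fin.lt_def] at hj'
      rw [this]
      exact Nat.zero_le _⟩
  exact (Finset.mem_filter.mp hmem).2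

lemma le_blockOf {p : ℕ} {j : Fin l} (h : offset ks j ≤ p) : j ≤ blockOf hl ks p :=
  Finset.le_max' _ j (by simp [h])

lemma lt_offset_add (p : ℕ) (hp : p < ∑ j, ks j) (hks : ∀ j, 0 < ks j) :
    p < offset ks (blockOf hl ks p) + ks (blockOf hl ks p) := by
  by_contra hcon
  push_neg at hcon
  set b := blockOf hl ks p with hb
  -- if b is last, contradiction with hp via le_offset_total... need offset b + ks b = total only if b last
  by_cases hlast : (b : ℕ) + 1 < l
  · set b' : Fin l := ⟨(b : ℕ) + 1, hlast⟩ with hb'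
    have h1 : offset ks b' ≤ p := by
      refine le_trans ?_ hcon
      -- offset b' ≤ offset b + ks b
      have hbb' : b < b' := by simp [hb', Fin.lt_def]
      -- need offset b' ≤ offset b + ks b : filter (< b') ⊆ insert b (filter (< b))
      have hsub : Finset.univ.filter (fun j'' => j'' < b') ⊆
          insert b (Finset.univ.filter (fun j'' => j'' < b)) := by
        intro a ha
        simp only [Finset.mem_filter, Finset.mem_univ, true_and, Fin.lt_def] at ha
        rcases lt_or_eq_of_le (Nat.lt_succ_iff.mp ha) with h | h
        · exact Finset.mem_insert_of_mem (Finset.mem_filter.mpr ⟨Finset.mem_univ _, Fin.lt_def.mpr h⟩)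
        · exact Finset.mem_insert.mpr (Or.inl (Fin.ext h))
      have := Finset.sum_le_sum_of_subset (f := ks) hsub
      rwa [Finset.sum_insert (by simp), add_comm (ks b)] at this
    have := le_blockOf hl ks h1
    rw [← hb] at this
    have : b' ≤ b := this
    simp [hb', Fin.le_def] at this
  · -- b is the last block
    push_neg at hlast
    have hblast : ∀ j : Fin l, j ≤ b := fun j => by
      have : (j : ℕ) < l := j.isLt
      have : (j : ℕ) ≤ (b : ℕ) := by omega
      exact this
    -- total = offset b + ks b
    have htot : ∑ j', ks j' ≤ offset ks b + ks b := by
      have : (Finset.univ : Finset (Fin l)) ⊆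
          insert b (Finset.univ.filter (fun j'' => j'' < b)) := by
        intro a _
        rcases eq_or_lt_of_le (hblast a) with h | h
        · exact Finset.mem_insert.mpr (Or.inl h)
        · exact Finset.mem_insert_of_mem (by simp [h])
      have := Finset.sum_le_sum_of_subset (f := ks) this
      rwa [Finset.sum_insert (by simp), add_comm (ks b)] at this
    omega

lemma blockOf_eq_iff {p : ℕ} (hp : p < ∑ j, ks j) (hks : ∀ j, 0 < ks j) {j : Fin l} :
    blockOf hl ks p = j ↔ offset ks j ≤ p ∧ p < offset ks j + ks j := by
  constructor
  · rintro rfl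
    exact ⟨offset_le_self hl ks p, lt_offset_add hl ks p hp hks⟩
  · rintro ⟨h1, h2⟩
    have hjb := le_blockOf hl ks h1
    rcases eq_or_lt_of_le hjb with h | h
    · exact h.symm
    · exfalso
      have := offset_add_le ks h
      have := offset_le_self hl ks p
      omega

lemma blockOf_offset (j : Fin l) (hks : ∀ j, 0 < ks j) (htot : offset ks j < ∑ j', ks j') :
    blockOf hl ks (offset ks j) = j :=
  (blockOf_eq_iff hl ks htot hks).mpr ⟨le_rfl, by have := hks j; omega⟩

end BlockLemmas



lemma card_val_interval (n a c : ℕ) (h : a + c ≤ n) :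
    ((Finset.univ : Finset (Fin n)).filter fun p => a ≤ p.val ∧ p.val < a + c).card = c := by
  rw [← Finset.card_range c]
  apply Finset.card_bij' (fun p _ => p.val - a)
    (fun i hi => (⟨a + i, by simp only [Finset.mem_range] at hi; omega⟩ : Fin n)) <;>
  · intro p hp
    simp only [Finset.mem_filter, Finset.mem_univ, true_and, Finset.mem_range, Finset.card_range] at hp ⊢
    first
      | omega
      | (apply Fin.ext; simp only []; omega)

section CountLemmas
variable {l : ℕ} (hl : 0 < l) (ks : Fin l → ℕ)

lemma offset_injective (hks : ∀ j, 0 < ks j) : Function.Injective (offset ks) := by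
  intro j j' h
  by_contra hne
  rcases lt_or_gt_of_ne hne with hlt | hlt
  · have := offset_add_le ks hlt; have := hks j; omega
  · have := offset_add_le ks hlt; have := hks j'; omega

lemma card_blockOf_fiber (hks : ∀ j, 0 < ks j) (j : Fin l) :
    ((Finset.univ : Finset (Fin (∑ j', ks j'))).filter
      fun p => blockOf hl ks p.val = j).card = ks j := by
  have heq : ((Finset.univ : Finset (Fin (∑ j', ks j'))).filter
      fun p => blockOf hl ks p.val = j) =
      (Finset.univ.filter fun p : Fin (∑ j', ks j') =>
        offset ks j ≤ p.val ∧ p.val < offset ks j + ks j) := by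
    apply Finset.filter_congr
    intro p _
    exact ⟨fun h => (blockOf_eq_iff hl ks p.isLt hks).mp h,
      fun h => (blockOf_eq_iff hl ks p.isLt hks).mpr h⟩
  rw [heq, card_val_interval _ _ _ (le_offset_total ks j)]

lemma blockOf_leaderPos (hks : ∀ j, 0 < ks j) (p : Fin (∑ j, ks j)) :
    blockOf hl ks (leaderPos hl ks p).val = blockOf hl ks p.val := by
  have : (leaderPos hl ks p).val = offset ks (blockOf hl ks p.val) := rfl
  rw [this]
  exact blockOf_offset hl ks _ hks (lt_of_eq_of_lt this.symm (leaderPos hl ks p).isLt)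

lemma leaderPos_eq_iff (hks : ∀ j, 0 < ks j) (p q : Fin (∑ j, ks j)) :
    leaderPos hl ks p = leaderPos hl ks q ↔ blockOf hl ks p.val = blockOf hl ks q.val := by
  constructor
  · intro h
    have : offset ks (blockOf hl ks p.val) = offset ks (blockOf hl ks q.val) :=
      congrArg Fin.val h
    exact offset_injective ks hks this
  · intro h
    apply Fin.ext
    show offset ks (blockOf hl ks p.val) = offset ks (blockOf hl ks q.val)
    rw [h]

lemma leaderPos_idem (hks : ∀ j, 0 < ks j) (p : Fin (∑ j, ks j)) :
    leaderPos hl ks (leaderPos hl ks p) = leaderPos hl ks p := by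
  apply Fin.ext
  show offset ks (blockOf hl ks (leaderPos hl ks p).val) = (leaderPos hl ks p).val
  rw [blockOf_leaderPos hl ks hks]
  rfl

lemma countT (hks : ∀ j, 0 < ks j) :
    ∑ p : Fin (∑ j, ks j), ∑ q : Fin (∑ j, ks j),
      (if leaderPos hl ks p = leaderPos hl ks q then (1:ℝ) else 0)
    = ∑ j, (ks j : ℝ)^2 := by
  have h1 : ∀ p : Fin (∑ j, ks j),
      (∑ q : Fin (∑ j, ks j),
        (if leaderPos hl ks p = leaderPos hl ks q then (1:ℝ) else 0))
      = (ks (blockOf hl ks p.val) : ℝ) := by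
    intro p
    have : ∀ q : Fin (∑ j, ks j),
        (if leaderPos hl ks p = leaderPos hl ks q then (1:ℝ) else 0)
        = (if blockOf hl ks q.val = blockOf hl ks p.val then (1:ℝ) else 0) := by
      intro q
      congr 1
      simp only [eq_iff_iff]
      rw [leaderPos_eq_iff hl ks hks, eq_comm]
    rw [Finset.sum_congr rfl (fun q _ => this q), Finset.sum_boole,
      card_blockOf_fiber hl ks hks]
  rw [Finset.sum_congr rfl (fun p _ => h1 p)]
  rw [← Finset.sum_fiberwise_of_maps_to (g := fun p : Fin (∑ j, ks j) => blockOf hl ks p.val)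
    (t := Finset.univ) (fun p _ => Finset.mem_univ _)]
  apply Finset.sum_congr rfl
  intro j _
  have : ∀ p ∈ Finset.univ.filter (fun p : Fin (∑ j', ks j') => blockOf hl ks p.val = j),
      (ks (blockOf hl ks p.val) : ℝ) = (ks j : ℝ) := by
    intro p hp
    rw [(Finset.mem_filter.mp hp).2]
  rw [Finset.sum_congr rfl this, Finset.sum_const, card_blockOf_fiber hl ks hks]
  simp [sq]

lemma countU (hks : ∀ j, 0 < ks j) :
    ∑ p : Fin (∑ j, ks j), ∑ q : Fin (∑ j, ks j),
      (if leaderPos hl ks p = q then (1:ℝ) else 0) = ((∑ j, ks j : ℕ) : ℝ) := by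
  have : ∀ p : Fin (∑ j, ks j), (∑ q : Fin (∑ j, ks j),
      (if leaderPos hl ks p = q then (1:ℝ) else 0)) = 1 := by
    intro p
    rw [Finset.sum_ite_eq]
    simp
  rw [Finset.sum_congr rfl (fun p _ => this p)]
  simp

lemma countU' (hks : ∀ j, 0 < ks j) :
    ∑ p : Fin (∑ j, ks j), ∑ q : Fin (∑ j, ks j),
      (if p = leaderPos hl ks q then (1:ℝ) else 0) = ((∑ j, ks j : ℕ) : ℝ) := by
  rw [Finset.sum_comm]
  have : ∀ q : Fin (∑ j, ks j), (∑ p : Fin (∑ j, ks j),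
      (if p = leaderPos hl ks q then (1:ℝ) else 0)) = 1 := by
    intro q
    rw [Finset.sum_ite_eq']
    simp
  rw [Finset.sum_congr rfl (fun q _ => this q)]
  simp

lemma countDiag (hks : ∀ j, 0 < ks j) :
    ∑ p : Fin (∑ j, ks j), ∑ q : Fin (∑ j, ks j),
      (if p = q then (1:ℝ) else 0) = ((∑ j, ks j : ℕ) : ℝ) := by
  have : ∀ p : Fin (∑ j, ks j), (∑ q : Fin (∑ j, ks j),
      (if p = q then (1:ℝ) else 0)) = 1 := by
    intro p
    rw [Finset.sum_ite_eq]
    simp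
  rw [Finset.sum_congr rfl (fun p _ => this p)]
  simp

end CountLemmas



lemma exists_perm {α : Type*} [DecidableEq α] {m n m' n' : α} (h : m ≠ n) (h' : m' ≠ n') :
    ∃ π : Equiv.Perm α, π m = m' ∧ π n = n' := by
  classical
  set a := Equiv.swap m m' n with ha_def
  have ham' : a ≠ m' := by
    by_cases hmm : m = m'
    · subst hmm
      simp only [ha_def, Equiv.swap_self, Equiv.refl_apply]
      exact fun hh => h (hh ▸ rfl)
    · intro hh
      have h2 : Equiv.swap m m' m = m' := Equiv.swap_apply_left m m'
      exact h ((Equiv.swap m m').injective (hh.trans h2.symm)).symm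
  by_cases ha : a = n'
  · exact ⟨Equiv.swap m m', by simp [Equiv.swap_apply_left], ha⟩
  · refine ⟨(Equiv.swap m m').trans (Equiv.swap a n'), ?_, ?_⟩
    · simp only [Equiv.trans_apply, Equiv.swap_apply_left]
      exact Equiv.swap_apply_of_ne_of_ne (Ne.symm ham') h'
    · simp only [Equiv.trans_apply, ← ha_def, Equiv.swap_apply_left]

section
variable {k N : ℕ}

/-- composing with a permutation is a bijection on fibers -/
lemma fiber1_card_eq (r : Fin k) (m m' : Fin N) :
    ((Finset.univ.filter (fun I : Fin k → Fin N => Function.Injective I)).filter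
      (fun I => I r = m)).card =
    ((Finset.univ.filter (fun I : Fin k → Fin N => Function.Injective I)).filter
      (fun I => I r = m')).card := by
  classical
  set π := Equiv.swap m m'
  apply Finset.card_bij' (fun I _ => π ∘ I) (fun I _ => π.symm ∘ I) <;>
  · intro I hI
    simp only [Finset.mem_filter, Finset.mem_univ, true_and, Function.comp] at hI ⊢
    first
      | exact ⟨π.injective.comp hI.1, by rw [hI.2]; simp [π, Equiv.swap_apply_left]⟩
      | exact ⟨π.symm.injective.comp hI.1, by rw [hI.2]; simp [π, Equiv.symm_apply_eq, Equiv.swap_apply_right]⟩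
      | (funext p; simp)

lemma fiber2_card_eq {r s : Fin k} (m n m' n' : Fin N) (hmn : m ≠ n) (hmn' : m' ≠ n') :
    ((Finset.univ.filter (fun I : Fin k → Fin N => Function.Injective I)).filter
      (fun I => I r = m ∧ I s = n)).card =
    ((Finset.univ.filter (fun I : Fin k → Fin N => Function.Injective I)).filter
      (fun I => I r = m' ∧ I s = n')).card := by
  classical
  obtain ⟨π, hπ1, hπ2⟩ := exists_perm hmn hmn'
  apply Finset.card_bij' (fun I _ => π ∘ I) (fun I _ => π.symm ∘ I)
  · intro I hI
    simp only [Finset.mem_filter, Finset.mem_univ, true_and, Function.comp] at hI ⊢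
    exact ⟨π.injective.comp hI.1, by rw [hI.2.1, hπ1], by rw [hI.2.2, hπ2]⟩
  · intro I hI
    simp only [Finset.mem_filter, Finset.mem_univ, true_and, Function.comp] at hI ⊢
    refine ⟨π.symm.injective.comp hI.1, ?_, ?_⟩
    · rw [hI.2.1, ← hπ1, Equiv.symm_apply_apply]
    · rw [hI.2.2, ← hπ2, Equiv.symm_apply_apply]
  · intro I _; funext p; simp
  · intro I _; funext p; simp

lemma sum_single (hkN : 0 < k) (r : Fin k) (f : Fin N → ℝ) :
    (N : ℝ) * ∑ I ∈ Finset.univ.filter (fun I : Fin k → Fin N => Function.Injective I),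
        f (I r)
      = (((Finset.univ.filter (fun I : Fin k → Fin N => Function.Injective I)).card : ℝ))
        * ∑ m, f m := by
  classical
  set S := Finset.univ.filter (fun I : Fin k → Fin N => Function.Injective I) with hS
  have hdecomp : ∑ I ∈ S, f (I r)
      = ∑ m : Fin N, ((S.filter (fun I => I r = m)).card : ℝ) * f m := by
    rw [← Finset.sum_fiberwise_of_maps_to (g := fun I : Fin k → Fin N => I r)
      (t := Finset.univ) (fun I _ => Finset.mem_univ _)]
    apply Finset.sum_congr rfl
    intro m _
    have : ∀ I ∈ S.filter (fun I => I r = m), f (I r) = f m := by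
      intro I hI
      rw [(Finset.mem_filter.mp hI).2]
    rw [Finset.sum_congr rfl this, Finset.sum_const, nsmul_eq_mul]
  have hcard : (S.card : ℝ) = ∑ m : Fin N, ((S.filter (fun I => I r = m)).card : ℝ) := by
    rw [← Nat.cast_sum]
    norm_cast
    exact Finset.card_eq_sum_card_fiberwise (fun I _ => Finset.mem_univ (I r))
  rw [hdecomp, hcard, Finset.mul_sum, Finset.mul_sum]
  apply Finset.sum_congr rfl
  intro m _
  -- LHS: N * (c_m * f m), RHS: (∑ m', c_m') * f m ; use c_m' = c_m
  have : ∀ m' : Fin N, ((S.filter (fun I => I r = m')).card : ℝ)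
      = ((S.filter (fun I => I r = m)).card : ℝ) := by
    intro m'; rw [hS]; exact_mod_cast congrArg (Nat.cast : ℕ → ℝ) (fiber1_card_eq r m' m)
  calc (N:ℝ) * (((S.filter (fun I => I r = m)).card : ℝ) * f m)
      = (∑ _m' : Fin N, ((S.filter (fun I => I r = m)).card : ℝ)) * f m := by
        rw [Finset.sum_const]; simp only [Finset.card_univ, Fintype.card_fin, nsmul_eq_mul]; ring
    _ = (∑ m' : Fin N, ((S.filter (fun I => I r = m')).card : ℝ)) * f m := by
        rw [Finset.sum_congr rfl (fun m' _ => (this m'))]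

lemma pairs_fiber_card (m : Fin N) :
    (((Finset.univ : Finset (Fin N × Fin N)).filter (fun mn => mn.1 ≠ mn.2)).filter
      (fun mn => mn.1 = m)).card = N - 1 := by
  classical
  have : (((Finset.univ : Finset (Fin N × Fin N)).filter (fun mn => mn.1 ≠ mn.2)).filter
      (fun mn => mn.1 = m)).card = (Finset.univ.erase m).card := by
    refine Finset.card_bij' (fun mn _ => mn.2) (fun n _ => (m, n)) ?_ ?_ ?_ ?_
    · intro mn hmn
      simp only [Finset.mem_filter, Finset.mem_univ, true_and] at hmn
      apply Finset.mem_erase.mpr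
      refine ⟨?_, Finset.mem_univ _⟩
      intro hh
      exact hmn.1 (hmn.2.trans hh.symm)
    · intro n hn
      simp only [Finset.mem_erase, Finset.mem_univ, and_true] at hn
      simp only [Finset.mem_filter, Finset.mem_univ, true_and]
      exact ⟨fun hh => hn hh.symm, trivial⟩
    · intro mn hmn
      simp only [Finset.mem_filter, Finset.mem_univ, true_and] at hmn
      exact Prod.ext hmn.2.symm rfl
    · intro n _; rfl
  rw [this, Finset.card_erase_of_mem (Finset.mem_univ m), Finset.card_univ, Fintype.card_fin]

lemma sum_pair {r s : Fin k} (hrs : r ≠ s) (g : Fin N → Fin N → ℝ) :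
    (N : ℝ) * ((N : ℝ) - 1) *
        ∑ I ∈ Finset.univ.filter (fun I : Fin k → Fin N => Function.Injective I),
          g (I r) (I s)
      = (((Finset.univ.filter (fun I : Fin k → Fin N => Function.Injective I)).card : ℝ))
        * ∑ mn ∈ (Finset.univ : Finset (Fin N × Fin N)).filter (fun mn => mn.1 ≠ mn.2),
            g mn.1 mn.2 := by
  classical
  set S := Finset.univ.filter (fun I : Fin k → Fin N => Function.Injective I) with hS
  set P := (Finset.univ : Finset (Fin N × Fin N)).filter (fun mn => mn.1 ≠ mn.2) with hP
  have hmaps : ∀ I ∈ S, ((I r, I s) : Fin N × Fin N) ∈ P := by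
    intro I hI
    have hinj : Function.Injective I := (Finset.mem_filter.mp hI).2
    simp only [hP, Finset.mem_filter, Finset.mem_univ, true_and]
    exact fun hh => hrs (hinj hh)
  have hdecomp : ∑ I ∈ S, g (I r) (I s)
      = ∑ mn ∈ P, ((S.filter (fun I => (I r, I s) = mn)).card : ℝ) * g mn.1 mn.2 := by
    rw [← Finset.sum_fiberwise_of_maps_to (g := fun I : Fin k → Fin N => ((I r, I s) : Fin N × Fin N))
      (t := P) hmaps]
    apply Finset.sum_congr rfl
    intro mn _
    have : ∀ I ∈ S.filter (fun I => (I r, I s) = mn), g (I r) (I s) = g mn.1 mn.2 := by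
      intro I hI
      have := (Finset.mem_filter.mp hI).2
      rw [← this]
    rw [Finset.sum_congr rfl this, Finset.sum_const, nsmul_eq_mul]
  have hcard : (S.card : ℝ) = ∑ mn ∈ P, ((S.filter (fun I => (I r, I s) = mn)).card : ℝ) := by
    rw [← Nat.cast_sum]
    norm_cast
    exact Finset.card_eq_sum_card_fiberwise hmaps
  have hconst : ∀ mn ∈ P, ∀ mn' ∈ P,
      (S.filter (fun I => (I r, I s) = mn)).card
      = (S.filter (fun I => (I r, I s) = mn')).card := by
    intro mn hmn mn' hmn'
    simp only [hP, Finset.mem_filter, Finset.mem_univ, true_and] at hmn hmn'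
    have e1 : (S.filter (fun I => (I r, I s) = mn))
        = (S.filter (fun I => I r = mn.1 ∧ I s = mn.2)) := by
      apply Finset.filter_congr; intro I _; rw [Prod.ext_iff]
    have e2 : (S.filter (fun I => (I r, I s) = mn'))
        = (S.filter (fun I => I r = mn'.1 ∧ I s = mn'.2)) := by
      apply Finset.filter_congr; intro I _; rw [Prod.ext_iff]
    rw [e1, e2, hS]
    exact fiber2_card_eq mn.1 mn.2 mn'.1 mn'.2 hmn hmn'
  have hPcard : ((P.card : ℝ)) = (N : ℝ) * ((N : ℝ) - 1) := by
    have h1 : P.card = ∑ m : Fin N, ((P.filter (fun mn => mn.1 = m)).card) :=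
      Finset.card_eq_sum_card_fiberwise (fun mn _ => Finset.mem_univ mn.1)
    have h2 : ∀ m : Fin N, (((P.filter (fun mn => mn.1 = m)).card : ℝ)) = (N : ℝ) - 1 := by
      intro m
      have hN1 : 1 ≤ N := m.pos
      rw [hP, pairs_fiber_card m]
      push_cast [Nat.cast_sub hN1]
      ring
    rw [h1]
    push_cast
    rw [Finset.sum_congr rfl (fun m _ => h2 m), Finset.sum_const, Finset.card_univ,
      Fintype.card_fin, nsmul_eq_mul]
  rw [hdecomp, hcard, Finset.mul_sum, Finset.mul_sum]
  apply Finset.sum_congr rfl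
  intro mn hmn
  have hsum : ∑ mn' ∈ P, ((S.filter (fun I => (I r, I s) = mn')).card : ℝ)
      = (P.card : ℝ) * ((S.filter (fun I => (I r, I s) = mn)).card : ℝ) := by
    have hc : ∀ mn' ∈ P, ((S.filter (fun I => (I r, I s) = mn')).card : ℝ)
        = ((S.filter (fun I => (I r, I s) = mn)).card : ℝ) := by
      intro mn' hmn'
      exact_mod_cast congrArg (Nat.cast : ℕ → ℝ) (hconst mn' hmn' mn hmn)
    rw [Finset.sum_congr rfl hc, Finset.sum_const, nsmul_eq_mul]
  rw [hsum, hPcard]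
  ring
end

lemma card_inj_filter (k N : ℕ) :
    (Finset.univ.filter (fun I : Fin k → Fin N => Function.Injective I)).card
      = N.descFactorial k := by
  classical
  rw [← Fintype.card_subtype]
  rw [Fintype.card_congr (Equiv.subtypeInjectiveEquivEmbedding (Fin k) (Fin N))]
  rw [Fintype.card_embedding_eq, Fintype.card_fin, Fintype.card_fin]

lemma card_inj_real {k N : ℕ} (hkN : k ≤ N) :
    ((Finset.univ.filter (fun I : Fin k → Fin N => Function.Injective I)).card : ℝ)
      = ∏ i ∈ Finset.range k, ((N : ℝ) - (i : ℝ)) := by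
  rw [card_inj_filter, Nat.descFactorial_eq_prod_range, Nat.cast_prod]
  apply Finset.prod_congr rfl
  intro i hi
  have : i ≤ N := le_trans (le_of_lt (Finset.mem_range.mp hi)) hkN
  exact Nat.cast_sub this

lemma prod_desc_pos {k N : ℕ} (hkN : k ≤ N) :
    0 < ∏ i ∈ Finset.range k, ((N : ℝ) - (i : ℝ)) := by
  apply Finset.prod_pos
  intro i hi
  have hi' : i < N := lt_of_lt_of_le (Finset.mem_range.mp hi) hkN
  have : (i : ℝ) < (N : ℝ) := by exact_mod_cast hi'
  linarith

lemma empVar_eq {N : ℕ} (hN : 0 < N) (y : Fin N → ℝ) :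
    empVar y = ((∑ m, (y m)^2) - (∑ m, y m)^2 / N) / ((N : ℝ) - 1) := by
  have hN0 : (N : ℝ) ≠ 0 := by positivity
  unfold empVar centerOfMass
  congr 1
  have expand : ∀ m : Fin N, (y m - (∑ m', y m') / N)^2
      = (y m)^2 - 2 * ((∑ m', y m') / N) * y m + ((∑ m', y m') / N)^2 := by
    intro m; ring
  rw [Finset.sum_congr rfl (fun m _ => expand m)]
  rw [Finset.sum_add_distrib, Finset.sum_sub_distrib, ← Finset.mul_sum,
    Finset.sum_const, Finset.card_univ, Fintype.card_fin, nsmul_eq_mul]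
  field_simp
  ring



section SyncLemmas
variable {l : ℕ} (hl : 0 < l) (ks : Fin l → ℕ) {N : ℕ}

lemma syncMap_apply_inj {I : Fin (∑ j, ks j) → Fin N} (hI : Function.Injective I)
    (x : Fin N → ℝ) (p : Fin (∑ j, ks j)) :
    syncMap hl ks I x (I p) = x (I (leaderPos hl ks p)) := by
  unfold syncMap
  have h : ∃ q, I q = I p := ⟨p, rfl⟩
  rw [dif_pos h]
  have hc : h.choose = p := hI h.choose_spec
  rw [hc]

lemma syncMap_apply_not {I : Fin (∑ j, ks j) → Fin N} {m : Fin N}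
    (hm : ∀ p, I p ≠ m) (x : Fin N → ℝ) :
    syncMap hl ks I x m = x m := by
  unfold syncMap
  rw [dif_neg]
  rintro ⟨p, hp⟩
  exact hm p hp

lemma sum_syncMap {I : Fin (∑ j, ks j) → Fin N} (hI : Function.Injective I)
    (x : Fin N → ℝ) (F : ℝ → ℝ) :
    ∑ m, F (syncMap hl ks I x m)
      = (∑ m, F (x m))
        + ∑ p, (F (x (I (leaderPos hl ks p))) - F (x (I p))) := by
  classical
  have key : ∑ m, (F (syncMap hl ks I x m) - F (x m))
      = ∑ p, (F (x (I (leaderPos hl ks p))) - F (x (I p))) := by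
    rw [← Finset.sum_subset (Finset.subset_univ (Finset.univ.image I))
      (fun m _ hm => ?_)]
    · rw [Finset.sum_image (fun p _ q _ h => hI h)]
      apply Finset.sum_congr rfl
      intro p _
      rw [syncMap_apply_inj hl ks hI x p]
    · have : ∀ p, I p ≠ m := by
        intro p hp
        exact hm (Finset.mem_image.mpr ⟨p, Finset.mem_univ _, hp⟩)
      rw [syncMap_apply_not hl ks this x, sub_self]
  have h2 : ∀ m, F (syncMap hl ks I x m)
      = (F (syncMap hl ks I x m) - F (x m)) + F (x m) := fun m => by ring
  rw [Finset.sum_congr rfl (fun m _ => h2 m), Finset.sum_add_distrib, key]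
  ring

end SyncLemmas

lemma sum_offdiag {N : ℕ} (x : Fin N → ℝ) :
    ∑ mn ∈ (Finset.univ : Finset (Fin N × Fin N)).filter (fun mn => mn.1 ≠ mn.2),
        x mn.1 * x mn.2
      = (∑ m, x m)^2 - ∑ m, (x m)^2 := by
  classical
  rw [Finset.sum_filter, Fintype.sum_prod_type]
  have h1 : ∀ m : Fin N,
      (∑ n : Fin N, if m ≠ n then x m * x n else 0)
      = (∑ n, x m * x n) - x m * x m := by
    intro m
    have h0 : ∀ n : Fin N, (if m ≠ n then x m * x n else 0)
        = x m * x n - (if m = n then x m * x n else 0) := by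
      intro n; by_cases h : m = n <;> simp [h]
    rw [Finset.sum_congr rfl (fun n _ => h0 n), Finset.sum_sub_distrib,
      Finset.sum_ite_eq]
    simp
  rw [Finset.sum_congr rfl (fun m _ => h1 m), Finset.sum_sub_distrib]
  have h2 : ∑ m : Fin N, ∑ n : Fin N, x m * x n = (∑ m, x m)^2 := by
    rw [sq, Finset.sum_mul_sum]
  rw [h2]
  congr 1
  apply Finset.sum_congr rfl
  intro m _
  rw [sq]
end Aux

set_option maxHeartbeats 1000000 in
/-- contraction lemma for symmetric `k`-particle
synchronization of signature `(k_1,…,k_l)`.  The average of `V(J_I x)` over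
all `N(N−1)⋯(N−k+1)` injective tuples `I` equals `(1 − κ/(N(N−1))) V(x)`,
with `κ = Σ_j k_j² − k`. -/
theorem stmt_8 (l : ℕ) (hl : 1 ≤ l) (ks : Fin l → ℕ) (hks : ∀ j, 2 ≤ ks j)
    (N : ℕ) (hN : (∑ j, ks j) ≤ N) (x : Fin N → ℝ) :
    (∑ I ∈ Finset.univ.filter
        (fun I : Fin (∑ j, ks j) → Fin N => Function.Injective I),
        empVar (syncMap hl ks I x)) /
      (∏ i ∈ Finset.range (∑ j, ks j), ((N : ℝ) - (i : ℝ)))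
    = (1 - ((∑ j, ((ks j : ℝ)) ^ 2) - ((∑ j, ks j : ℕ) : ℝ)) /
          ((N : ℝ) * ((N : ℝ) - 1))) * empVar x := by
  classical
  have hks1 : ∀ j, 0 < ks j := fun j => lt_of_lt_of_le (by norm_num) (hks j)
  have hk2 : 2 ≤ ∑ j, ks j := by
    have h1 : ∑ _j : Fin l, 2 ≤ ∑ j, ks j := Finset.sum_le_sum (fun j _ => hks j)
    have h2 : ∑ _j : Fin l, 2 = l * 2 := by
      rw [Finset.sum_const, Finset.card_univ, Fintype.card_fin, smul_eq_mul]
    omega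
  have hkpos : 0 < ∑ j, ks j := by omega
  have hN2 : 2 ≤ N := le_trans hk2 hN
  have hNpos : 0 < N := by omega
  have hNR : (2:ℝ) ≤ (N:ℝ) := by exact_mod_cast hN2
  have hN0 : (N:ℝ) ≠ 0 := by linarith
  have hN1 : (N:ℝ) - 1 ≠ 0 := by linarith
  set S := Finset.univ.filter
    (fun I : Fin (∑ j, ks j) → Fin N => Function.Injective I) with hSdef
  set C : ℝ := (S.card : ℝ) with hCdef
  set S1 : ℝ := ∑ m, x m with hS1
  set S2 : ℝ := ∑ m, (x m)^2 with hS2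
  set c2 : ℝ := C * (S1^2 - S2) / ((N:ℝ) * ((N:ℝ) - 1)) with hc2
  set δ : ℝ := C * S2 / N - c2 with hδ
  set T : ℝ := ∑ j, (ks j : ℝ)^2 with hT
  set kR : ℝ := ((∑ j, ks j : ℕ) : ℝ) with hkR
  -- value of C
  have hC : C = ∏ i ∈ Finset.range (∑ j, ks j), ((N : ℝ) - (i : ℝ)) := by
    rw [hCdef, hSdef]; exact card_inj_real hN
  have hCpos : 0 < C := by rw [hC]; exact prod_desc_pos hN
  have hC0 : C ≠ 0 := ne_of_gt hCpos
  -- the pair-correlation values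
  have hW : ∀ r s : Fin (∑ j, ks j),
      (∑ I ∈ S, x (I r) * x (I s)) = c2 + (if r = s then δ else 0) := by
    intro r s
    by_cases hrs : r = s
    · subst hrs
      have h1 := sum_single hkpos r (fun m => x m * x m)
      rw [← hSdef, ← hCdef] at h1
      have hxx : ∑ m, x m * x m = S2 := by
        rw [hS2]; apply Finset.sum_congr rfl; intro m _; rw [sq]
      rw [hxx] at h1
      rw [if_pos rfl, hδ]
      have : (∑ I ∈ S, x (I r) * x (I r)) = C * S2 / N := by
        rw [eq_div_iff hN0]
        linarith [h1]
      rw [this]; ring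
    · have h1 := sum_pair hrs (fun m n => x m * x n)
      rw [← hSdef, ← hCdef, sum_offdiag x, ← hS1, ← hS2] at h1
      rw [if_neg hrs, hc2]
      have hNN : (N:ℝ) * ((N:ℝ) - 1) ≠ 0 := mul_ne_zero hN0 hN1
      have : (∑ I ∈ S, x (I r) * x (I s)) = C * (S1^2 - S2) / ((N:ℝ) * ((N:ℝ)-1)) := by
        rw [eq_div_iff hNN]
        linarith [h1]
      rw [this]; ring
  -- per-configuration expansion
  have hstepA : ∀ I ∈ S, empVar (syncMap hl ks I x)
      = ((S2 + ∑ p, ((x (I (leaderPos hl ks p)))^2 - (x (I p))^2))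
         - (S1 + ∑ p, (x (I (leaderPos hl ks p)) - x (I p)))^2 / N) / ((N:ℝ) - 1) := by
    intro I hI
    have hIinj : Function.Injective I := by
      have := Finset.mem_filter.mp (hSdef ▸ hI)
      exact this.2
    rw [empVar_eq hNpos]
    have e1 : ∑ m, (syncMap hl ks I x m)^2
        = (∑ m, (x m)^2) + ∑ p, ((x (I (leaderPos hl ks p)))^2 - (x (I p))^2) :=
      sum_syncMap hl ks hIinj x (fun t => t^2)
    have e2 : ∑ m, syncMap hl ks I x m
        = (∑ m, x m) + ∑ p, (x (I (leaderPos hl ks p)) - x (I p)) :=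
      sum_syncMap hl ks hIinj x (fun t => t)
    rw [e1, e2, ← hS1, ← hS2]
  -- vanishing of the square-difference term
  have hzero1 : ∑ I ∈ S, ∑ p, ((x (I (leaderPos hl ks p)))^2 - (x (I p))^2) = 0 := by
    rw [Finset.sum_comm]
    apply Finset.sum_eq_zero
    intro p _
    rw [Finset.sum_sub_distrib, sub_eq_zero]
    have h1 := sum_single hkpos (leaderPos hl ks p) (fun m => (x m)^2)
    have h2 := sum_single hkpos p (fun m => (x m)^2)
    rw [← hSdef, ← hCdef] at h1 h2
    apply mul_left_cancel₀ hN0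
    rw [h1, h2]
  -- vanishing of the linear difference term
  have hzero2 : ∑ I ∈ S, ∑ p, (x (I (leaderPos hl ks p)) - x (I p)) = 0 := by
    rw [Finset.sum_comm]
    apply Finset.sum_eq_zero
    intro p _
    rw [Finset.sum_sub_distrib, sub_eq_zero]
    have h1 := sum_single hkpos (leaderPos hl ks p) (fun m => x m)
    have h2 := sum_single hkpos p (fun m => x m)
    rw [← hSdef, ← hCdef] at h1 h2
    apply mul_left_cancel₀ hN0
    rw [h1, h2]
  -- the fluctuation second moment
  have hDD : ∑ I ∈ S, (∑ p, (x (I (leaderPos hl ks p)) - x (I p)))^2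
      = δ * (T - kR) := by
    have expand : ∀ I ∈ S, (∑ p, (x (I (leaderPos hl ks p)) - x (I p)))^2
        = ∑ p, ∑ q, (x (I (leaderPos hl ks p)) - x (I p))
            * (x (I (leaderPos hl ks q)) - x (I q)) := by
      intro I _
      rw [sq, Finset.sum_mul_sum]
    rw [Finset.sum_congr rfl expand, Finset.sum_comm]
    have swap2 : ∀ p ∈ (Finset.univ : Finset (Fin (∑ j, ks j))),
        ∑ I ∈ S, ∑ q, (x (I (leaderPos hl ks p)) - x (I p))
            * (x (I (leaderPos hl ks q)) - x (I q))
        = ∑ q, ∑ I ∈ S, (x (I (leaderPos hl ks p)) - x (I p))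
            * (x (I (leaderPos hl ks q)) - x (I q)) := by
      intro p _
      exact Finset.sum_comm
    rw [Finset.sum_congr rfl swap2]
    have inner : ∀ p ∈ (Finset.univ : Finset (Fin (∑ j, ks j))),
        ∀ q ∈ (Finset.univ : Finset (Fin (∑ j, ks j))),
        ∑ I ∈ S, (x (I (leaderPos hl ks p)) - x (I p))
            * (x (I (leaderPos hl ks q)) - x (I q))
        = δ * ((if leaderPos hl ks p = leaderPos hl ks q then (1:ℝ) else 0)
            - (if leaderPos hl ks p = q then (1:ℝ) else 0)
            - (if p = leaderPos hl ks q then (1:ℝ) else 0)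
            + (if p = q then (1:ℝ) else 0)) := by
      intro p _ q _
      have e : ∀ I ∈ S, (x (I (leaderPos hl ks p)) - x (I p))
            * (x (I (leaderPos hl ks q)) - x (I q))
          = x (I (leaderPos hl ks p)) * x (I (leaderPos hl ks q))
            - x (I (leaderPos hl ks p)) * x (I q)
            - x (I p) * x (I (leaderPos hl ks q))
            + x (I p) * x (I q) := by
        intro I _; ring
      rw [Finset.sum_congr rfl e, Finset.sum_add_distrib, Finset.sum_sub_distrib,
        Finset.sum_sub_distrib, hW _ _, hW _ _, hW _ _, hW _ _]
      have key : ∀ (c : Prop) [Decidable c], (if c then δ else 0) = δ * (if c then (1:ℝ) else 0) := by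
        intro c hc
        by_cases h : c <;> simp [h]
      rw [key _, key _, key _, key _]
      ring
    rw [Finset.sum_congr rfl (fun p hp => Finset.sum_congr rfl (inner p hp))]
    have pull : ∑ p : Fin (∑ j, ks j), ∑ q : Fin (∑ j, ks j),
        δ * ((if leaderPos hl ks p = leaderPos hl ks q then (1:ℝ) else 0)
            - (if leaderPos hl ks p = q then (1:ℝ) else 0)
            - (if p = leaderPos hl ks q then (1:ℝ) else 0)
            + (if p = q then (1:ℝ) else 0))
        = δ * (((∑ p : Fin (∑ j, ks j), ∑ q : Fin (∑ j, ks j), (if leaderPos hl ks p = leaderPos hl ks q then (1:ℝ) else 0))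
            - (∑ p : Fin (∑ j, ks j), ∑ q : Fin (∑ j, ks j), (if leaderPos hl ks p = q then (1:ℝ) else 0))
            - (∑ p : Fin (∑ j, ks j), ∑ q : Fin (∑ j, ks j), (if p = leaderPos hl ks q then (1:ℝ) else 0))
            + (∑ p : Fin (∑ j, ks j), ∑ q : Fin (∑ j, ks j), (if p = q then (1:ℝ) else 0)))) := by
      have step1 : ∀ p ∈ (Finset.univ : Finset (Fin (∑ j, ks j))),
          ∑ q : Fin (∑ j, ks j),
            δ * ((if leaderPos hl ks p = leaderPos hl ks q then (1:ℝ) else 0)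
              - (if leaderPos hl ks p = q then (1:ℝ) else 0)
              - (if p = leaderPos hl ks q then (1:ℝ) else 0)
              + (if p = q then (1:ℝ) else 0))
          = δ * ∑ q : Fin (∑ j, ks j),
              ((if leaderPos hl ks p = leaderPos hl ks q then (1:ℝ) else 0)
              - (if leaderPos hl ks p = q then (1:ℝ) else 0)
              - (if p = leaderPos hl ks q then (1:ℝ) else 0)
              + (if p = q then (1:ℝ) else 0)) := by
        intro p _
        rw [Finset.mul_sum]
      rw [Finset.sum_congr rfl step1, ← Finset.mul_sum]
      congr 1
      have inner_split : ∀ p ∈ (Finset.univ : Finset (Fin (∑ j, ks j))),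
          ∑ q : Fin (∑ j, ks j),
            ((if leaderPos hl ks p = leaderPos hl ks q then (1:ℝ) else 0)
              - (if leaderPos hl ks p = q then (1:ℝ) else 0)
              - (if p = leaderPos hl ks q then (1:ℝ) else 0)
              + (if p = q then (1:ℝ) else 0))
          = (∑ q : Fin (∑ j, ks j), (if leaderPos hl ks p = leaderPos hl ks q then (1:ℝ) else 0))
            - (∑ q : Fin (∑ j, ks j), (if leaderPos hl ks p = q then (1:ℝ) else 0))
            - (∑ q : Fin (∑ j, ks j), (if p = leaderPos hl ks q then (1:ℝ) else 0))
            + (∑ q : Fin (∑ j, ks j), (if p = q then (1:ℝ) else 0)) := by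
        intro p _
        rw [Finset.sum_add_distrib, Finset.sum_sub_distrib, Finset.sum_sub_distrib]
      rw [Finset.sum_congr rfl inner_split, Finset.sum_add_distrib,
        Finset.sum_sub_distrib, Finset.sum_sub_distrib]
    rw [pull, countT hl ks hks1, countU hl ks hks1, countU' hl ks hks1,
      countDiag ks hks1, ← hT, ← hkR]
    ring
  -- total sum
  have htotal : ∑ I ∈ S, empVar (syncMap hl ks I x)
      = ((C * S2 + ∑ I ∈ S, ∑ p, ((x (I (leaderPos hl ks p)))^2 - (x (I p))^2))
         - (∑ I ∈ S, (S1 + ∑ p, (x (I (leaderPos hl ks p)) - x (I p)))^2) / N)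
          / ((N:ℝ)-1) := by
    rw [Finset.sum_congr rfl hstepA, ← Finset.sum_div]
    congr 1
    rw [Finset.sum_sub_distrib, Finset.sum_add_distrib, Finset.sum_const,
      nsmul_eq_mul, ← hCdef, ← Finset.sum_div]
  have hB : ∑ I ∈ S, (S1 + ∑ p, (x (I (leaderPos hl ks p)) - x (I p)))^2
      = C * S1^2 + δ * (T - kR) := by
    have e : ∀ I ∈ S, (S1 + ∑ p, (x (I (leaderPos hl ks p)) - x (I p)))^2
        = S1^2 + (2 * S1) * (∑ p, (x (I (leaderPos hl ks p)) - x (I p)))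
          + (∑ p, (x (I (leaderPos hl ks p)) - x (I p)))^2 := by
      intro I _; ring
    rw [Finset.sum_congr rfl e, Finset.sum_add_distrib, Finset.sum_add_distrib,
      Finset.sum_const, nsmul_eq_mul, ← hCdef, ← Finset.mul_sum, hzero2, hDD]
    ring
  rw [htotal, hzero1, hB, empVar_eq hNpos x, ← hS1, ← hS2, ← hC, hδ, hc2]
  field_simp
  ring
end

section
/- Let 0 < k < 1, σ > 0, δ > 0, t > 0 and R₀ ∈ ℝ. Then the Poisson average of the conditional expected empirical variance satisfies the identity Σ_{n=0}^∞ e^{−δt} ((δt)^n/n!) · [ σ² t (1 − k^{n+1}) / ((n+1)(1 − k)) + k^n R₀ ] = (σ²/δ) · (1 − exp(−(1−k)δt))/(1 − k) + exp(−(1−k)δt) · R₀ (in particular the series converges). -/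
open Real

lemma exp_tsum' (x : ℝ) : ∑' n : ℕ, x ^ n / (Nat.factorial n : ℝ) = Real.exp x := by
  rw [Real.exp_eq_exp_ℝ, NormedSpace.exp_eq_tsum_div]

lemma shift_summable (x : ℝ) :
    Summable (fun n : ℕ => x ^ (n + 1) / (Nat.factorial (n + 1) : ℝ)) :=
  (summable_nat_add_iff 1).2 (Real.summable_pow_div_factorial x)

lemma shift_tsum (x : ℝ) :
    ∑' n : ℕ, x ^ (n + 1) / (Nat.factorial (n + 1) : ℝ) = Real.exp x - 1 := by
  have h := Real.summable_pow_div_factorial x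
  have := Summable.tsum_eq_zero_add h
  rw [exp_tsum' x] at this
  simp at this
  linarith [this]

/-- Poisson averaging identity.  For `0 < k < 1`, `σ > 0`,
`δ > 0`, `t > 0` and `R₀ ∈ ℝ`,
`Σ_{n=0}^∞ e^{−δt} ((δt)^n/n!) [σ² t (1 − k^{n+1})/((n+1)(1−k)) + k^n R₀]
  = (σ²/δ)(1 − e^{−(1−k)δt})/(1−k) + e^{−(1−k)δt} R₀`,
and in particular the series converges. -/
theorem stmt_14 (k σ δ t R₀ : ℝ) (hk0 : 0 < k) (hk1 : k < 1)
    (hσ : 0 < σ) (hδ : 0 < δ) (ht : 0 < t) :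
    Summable (fun n : ℕ =>
      Real.exp (-δ * t) * ((δ * t) ^ n / (Nat.factorial n)) *
        (σ ^ 2 * t * (1 - k ^ (n + 1)) / (((n : ℝ) + 1) * (1 - k)) + k ^ n * R₀)) ∧
    ∑' n : ℕ,
      Real.exp (-δ * t) * ((δ * t) ^ n / (Nat.factorial n)) *
        (σ ^ 2 * t * (1 - k ^ (n + 1)) / (((n : ℝ) + 1) * (1 - k)) + k ^ n * R₀)
    = (σ ^ 2 / δ) * (1 - Real.exp (-(1 - k) * δ * t)) / (1 - k)
        + Real.exp (-(1 - k) * δ * t) * R₀ := by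
  set C : ℝ := Real.exp (-δ * t) * σ ^ 2 / (δ * (1 - k)) with hC
  set D : ℝ := Real.exp (-δ * t) * R₀ with hD
  have hknz : (1 : ℝ) - k ≠ 0 := by linarith
  have hδnz : δ ≠ 0 := ne_of_gt hδ
  have hfun : ∀ n : ℕ,
      Real.exp (-δ * t) * ((δ * t) ^ n / (Nat.factorial n)) *
        (σ ^ 2 * t * (1 - k ^ (n + 1)) / (((n : ℝ) + 1) * (1 - k)) + k ^ n * R₀)
      = C * ((δ * t) ^ (n + 1) / (Nat.factorial (n + 1))
             - (k * δ * t) ^ (n + 1) / (Nat.factorial (n + 1)))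
        + D * ((k * δ * t) ^ n / (Nat.factorial n)) := by
    intro n
    have hfac : (Nat.factorial (n + 1) : ℝ) = ((n : ℝ) + 1) * (Nat.factorial n) := by
      push_cast [Nat.factorial_succ]; ring
    have hfnz : (Nat.factorial n : ℝ) ≠ 0 := by positivity
    have hn1 : ((n : ℝ) + 1) ≠ 0 := by positivity
    rw [hfac, hC, hD]
    have hkp : (k * δ * t) ^ (n + 1) = k ^ (n + 1) * (δ * t) ^ (n + 1) := by
      rw [← mul_pow]; ring_nf
    have hkp' : (k * δ * t) ^ n = k ^ n * (δ * t) ^ n := by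
      rw [← mul_pow]; ring_nf
    rw [hkp, hkp', pow_succ]
    field_simp
    ring
  have hsa : Summable (fun n : ℕ =>
      C * ((δ * t) ^ (n + 1) / (Nat.factorial (n + 1))
           - (k * δ * t) ^ (n + 1) / (Nat.factorial (n + 1)))) :=
    ((shift_summable (δ * t)).sub (shift_summable (k * δ * t))).mul_left C
  have hsb : Summable (fun n : ℕ => D * ((k * δ * t) ^ n / (Nat.factorial n))) :=
    (Real.summable_pow_div_factorial (k * δ * t)).mul_left D
  have hfe : (fun n : ℕ =>
      Real.exp (-δ * t) * ((δ * t) ^ n / (Nat.factorial n)) *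
        (σ ^ 2 * t * (1 - k ^ (n + 1)) / (((n : ℝ) + 1) * (1 - k)) + k ^ n * R₀))
      = fun n => C * ((δ * t) ^ (n + 1) / (Nat.factorial (n + 1))
             - (k * δ * t) ^ (n + 1) / (Nat.factorial (n + 1)))
        + D * ((k * δ * t) ^ n / (Nat.factorial n)) := funext hfun
  constructor
  · rw [hfe]; exact hsa.add hsb
  rw [hfe, Summable.tsum_add hsa hsb, tsum_mul_left, tsum_mul_left,
    Summable.tsum_sub (shift_summable (δ * t)) (shift_summable (k * δ * t)),
    shift_tsum, shift_tsum, exp_tsum']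
  have hek : Real.exp (-(1 - k) * δ * t) = Real.exp (-δ * t) * Real.exp (k * δ * t) := by
    rw [← Real.exp_add]; ring_nf
  have he1 : Real.exp (-δ * t) * Real.exp (δ * t) = 1 := by
    rw [← Real.exp_add]; simp
  rw [hek, hC, hD]
  field_simp
  have he2 : Real.exp (-(δ * t)) * Real.exp (δ * t) = 1 := by
    rw [← Real.exp_add]; simp
  linear_combination σ ^ 2 * he2
end
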